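/- Let G be a finite simple graph with vertex set V, and let T be a tree on the same vertex set V (a connected acyclic simple graph on V). For an edge e = uv of T, let V_e denote the vertex set of the connected component containing u after deleting e from T, so that removing e partitions V into (V_e, V ∖ V_e). Then for every A ⊆ V, the edge boundary ∂A in G equals the symmetric difference, over all edges e = uv of T with u ∈ A and v ∉ A, of the edge boundaries ∂V_e in G. -/

import Mathlib

open Finset
open scoped Classical

variable {V : Type*}

/-- The edge boundary `∂S`: the set of edges of `G` with exactly one endpoint in `S`. -/
noncomputable def edgeBoundary [Fintype V] [DecidableEq V] (G : SimpleGraph V) (S : Finset V) :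
    Finset (Sym2 V) :=
  Finset.univ.filter fun e => e ∈ G.edgeSet ∧ ∃ u v, e = s(u, v) ∧ u ∈ S ∧ v ∉ S

/-- A cutset of `G` is an edge boundary `∂S` with `∅ ≠ S ≠ V`. -/
def IsCutset [Fintype V] [DecidableEq V] (G : SimpleGraph V) (D : Finset (Sym2 V)) : Prop :=
  ∃ S : Finset V, S ≠ ∅ ∧ S ≠ Finset.univ ∧ D = edgeBoundary G S

/-- Symmetric difference of a finite family of edge sets: the set of edges occurring in an
odd number of members of the family. -/
noncomputable def symmDiffFamily [Fintype V] [DecidableEq V] {ι : Type*} (s : Finset ι)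
    (f : ι → Finset (Sym2 V)) : Finset (Sym2 V) :=
  Finset.univ.filter fun e => Odd ((s.filter fun i => e ∈ f i).card)

/-- A cut basis: a family of `n - 1` cutsets such that every element of the cut space is the
symmetric difference of a subfamily, and no nonempty subfamily has empty symmetric
difference. -/
def IsCutBasis [Fintype V] [DecidableEq V] (G : SimpleGraph V)
    (𝒟 : Finset (Finset (Sym2 V))) : Prop :=
  𝒟.card = Fintype.card V - 1 ∧
  (∀ D ∈ 𝒟, IsCutset G D) ∧
  (∀ S : Finset V, ∃ ℬ ⊆ 𝒟, edgeBoundary G S = symmDiffFamily ℬ id) ∧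
  (∀ ℬ ⊆ 𝒟, ℬ.Nonempty → symmDiffFamily ℬ id ≠ ∅)

/-- The weight `|D|` of an edge set `D`. -/
def weight (w : Sym2 V → ℝ) (D : Finset (Sym2 V)) : ℝ :=
  ∑ e ∈ D, w e

/-- A minimum cut basis: a cut basis of minimum total weight. -/
def IsMinCutBasis [Fintype V] [DecidableEq V] (G : SimpleGraph V) (w : Sym2 V → ℝ)
    (𝒟 : Finset (Finset (Sym2 V))) : Prop :=
  IsCutBasis G 𝒟 ∧
  ∀ 𝒟' : Finset (Finset (Sym2 V)), IsCutBasis G 𝒟' →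
    ∑ D ∈ 𝒟, weight w D ≤ ∑ D ∈ 𝒟', weight w D

/-- A cutset is relevant if it belongs to at least one minimum cut basis. -/
def IsRelevant [Fintype V] [DecidableEq V] (G : SimpleGraph V) (w : Sym2 V → ℝ)
    (D : Finset (Sym2 V)) : Prop :=
  ∃ 𝒟 : Finset (Finset (Sym2 V)), IsMinCutBasis G w 𝒟 ∧ D ∈ 𝒟

/-- A `u,v`-cut: a cutset of the form `∂S` with `u ∈ S` and `v ∉ S`. -/
def IsUVCut [Fintype V] [DecidableEq V] (G : SimpleGraph V) (u v : V)
    (D : Finset (Sym2 V)) : Prop :=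
  ∃ S : Finset V, u ∈ S ∧ v ∉ S ∧ D = edgeBoundary G S

/-- A minimum-weight `u,v`-cut. -/
def IsMinUVCut [Fintype V] [DecidableEq V] (G : SimpleGraph V) (w : Sym2 V → ℝ) (u v : V)
    (D : Finset (Sym2 V)) : Prop :=
  IsUVCut G u v D ∧ ∀ D' : Finset (Sym2 V), IsUVCut G u v D' → weight w D ≤ weight w D'

/-- A minimum `u,v`-cut with respect to unit weights (cardinality). -/
def IsMinUVCutCard [Fintype V] [DecidableEq V] (G : SimpleGraph V) (u v : V)
    (D : Finset (Sym2 V)) : Prop :=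
  IsUVCut G u v D ∧ ∀ D' : Finset (Sym2 V), IsUVCut G u v D' → D.card ≤ D'.card

private lemma odd_iff_zmod2' (n : ℕ) : Odd n ↔ (n : ZMod 2) = 1 := by
  rw [Nat.odd_iff, ← ZMod.natCast_mod n 2]
  rcases Nat.mod_two_eq_zero_or_one n with h | h <;> rw [h] <;> simp

private lemma exists_sym2_mem_iff' (x y : V) (P : V → Prop) :
    (∃ a b, s(x,y) = s(a,b) ∧ P a ∧ ¬ P b) ↔ (P x ∧ ¬ P y) ∨ (P y ∧ ¬ P x) := by
  constructor
  · rintro ⟨a, b, hab, ha, hb⟩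
    rw [Sym2.eq_iff] at hab
    rcases hab with ⟨rfl, rfl⟩ | ⟨rfl, rfl⟩
    · exact Or.inl ⟨ha, hb⟩
    · exact Or.inr ⟨ha, hb⟩
  · rintro (⟨h1, h2⟩ | ⟨h1, h2⟩)
    exacts [⟨x, y, rfl, h1, h2⟩, ⟨y, x, Sym2.eq_swap, h1, h2⟩]

private lemma zmod2_flip : ∀ a b c d : ZMod 2, a + b = c + d → a + c = d + b := by decide

/-- Let `G` be a finite simple graph on `V` and `T` a tree on the same vertex set
`V`. For every `A ⊆ V`, the edge boundary `∂A` in `G` is the symmetric difference, over all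
edges `uv` of `T` with `u ∈ A` and `v ∉ A`, of the boundaries `∂V_e` in `G`, where `V_e` is
the vertex set of the component of `u` in `T` minus the edge `uv`. -/
theorem boundary_eq_symmDiff_of_tree_cuts [Fintype V] [DecidableEq V] (G : SimpleGraph V)
    (T : SimpleGraph V) (hT : T.IsTree) (A : Finset V) :
    edgeBoundary G A =
      symmDiffFamily
        (Finset.univ.filter fun p : V × V => T.Adj p.1 p.2 ∧ p.1 ∈ A ∧ p.2 ∉ A)
        (fun p => edgeBoundary G
          (Finset.univ.filter fun x => (T.deleteEdges {s(p.1, p.2)}).Reachable p.1 x)) := by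
  classical
  set S : Finset (V × V) :=
    Finset.univ.filter fun p : V × V => T.Adj p.1 p.2 ∧ p.1 ∈ A ∧ p.2 ∉ A with hS
  set R : V × V → V → Prop := fun p z => (T.deleteEdges {s(p.1, p.2)}).Reachable p.1 z with hR
  have hbridge : ∀ u v : V, T.Adj u v → ¬ (T.deleteEdges {s(u,v)}).Reachable u v := by
    intro u v huv
    have hb := SimpleGraph.isAcyclic_iff_forall_adj_isBridge.mp hT.IsAcyclic huv
    exact SimpleGraph.isBridge_iff.mp hb
  have hRstep : ∀ (p : V × V), T.Adj p.1 p.2 → ∀ z z', T.Adj z z' → s(z, z') ≠ s(p.1, p.2) →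
      (R p z ↔ R p z') := by
    intro p hp z z' hzz' hne
    have hadj : (T.deleteEdges {s(p.1, p.2)}).Adj z z' := by
      simp only [SimpleGraph.deleteEdges_adj, Set.mem_singleton_iff]
      exact ⟨hzz', hne⟩
    exact ⟨fun h => h.trans hadj.reachable, fun h => h.trans hadj.symm.reachable⟩
  set χ : V → ZMod 2 := fun z => if z ∈ A then 1 else 0 with hχ
  set g : V → ZMod 2 :=
    fun z => ∑ p ∈ S, if R p z then (1 : ZMod 2) else 0 with hg
  have hstep : ∀ z z', T.Adj z z' → g z + χ z = g z' + χ z' := by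
    intro z z' hzz'
    have key : g z + g z' = χ z + χ z' := by
      have h1 : g z + g z' = ∑ p ∈ S,
          ((if R p z then (1 : ZMod 2) else 0) + (if R p z' then (1 : ZMod 2) else 0)) := by
        rw [hg, ← Finset.sum_add_distrib]
      have h2 : ∀ p ∈ S,
          ((if R p z then (1 : ZMod 2) else 0) + (if R p z' then (1 : ZMod 2) else 0)) =
          (if s(z, z') = s(p.1, p.2) then 1 else 0) := by
        intro p hp
        rw [hS, Finset.mem_filter] at hp
        obtain ⟨-, hadj, hp1, hp2⟩ := hp
        by_cases he : s(z, z') = s(p.1, p.2)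
        · rw [if_pos he]
          rw [Sym2.eq_iff] at he
          rcases he with ⟨hz, hz'⟩ | ⟨hz, hz'⟩
          · subst hz; subst hz'
            rw [if_pos (SimpleGraph.Reachable.refl _), if_neg (hbridge _ _ hadj)]
            decide
          · subst hz; subst hz'
            rw [if_neg (fun h => hbridge _ _ hadj h), if_pos (SimpleGraph.Reachable.refl _)]
            decide
        · rw [if_neg he]
          have hiff := hRstep p hadj z z' hzz' he
          by_cases hz : R p z
          · rw [if_pos hz, if_pos (hiff.mp hz)]; decide
          · rw [if_neg hz, if_neg (fun h => hz (hiff.mpr h))]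
            decide
      rw [h1, Finset.sum_congr rfl h2, Finset.sum_boole]
      -- now: ((S.filter fun p => s(z,z') = s(p.1,p.2)).card : ZMod 2) = χ z + χ z'
      by_cases hz : z ∈ A <;> by_cases hz' : z' ∈ A
      · -- both in A: filter is empty
        have : S.filter (fun p => s(z, z') = s(p.1, p.2)) = ∅ := by
          rw [Finset.filter_eq_empty_iff]
          intro p hp he
          rw [hS, Finset.mem_filter] at hp
          obtain ⟨-, hadj, hp1, hp2⟩ := hp
          rw [Sym2.eq_iff] at he
          rcases he with ⟨h1, h2⟩ | ⟨h1, h2⟩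
          · exact hp2 (h2 ▸ hz')
          · exact hp2 (h1 ▸ hz)
        rw [this]
        simp only [Finset.card_empty, Nat.cast_zero, hχ, if_pos hz, if_pos hz']
        decide
      · have : S.filter (fun p => s(z, z') = s(p.1, p.2)) = {(z, z')} := by
          ext p
          rw [Finset.mem_filter, hS, Finset.mem_filter, Finset.mem_singleton]
          constructor
          · rintro ⟨⟨-, hadj, hp1, hp2⟩, he⟩
            rw [Sym2.eq_iff] at he
            rcases he with ⟨h1, h2⟩ | ⟨h1, h2⟩
            · exact Prod.ext h1.symm h2.symm
            · exact absurd hp1 (h2 ▸ hz')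
          · rintro rfl
            exact ⟨⟨Finset.mem_univ _, hzz', hz, hz'⟩, rfl⟩
        rw [this]
        simp [hχ, hz, hz']
      · have : S.filter (fun p => s(z, z') = s(p.1, p.2)) = {(z', z)} := by
          ext p
          rw [Finset.mem_filter, hS, Finset.mem_filter, Finset.mem_singleton]
          constructor
          · rintro ⟨⟨-, hadj, hp1, hp2⟩, he⟩
            rw [Sym2.eq_iff] at he
            rcases he with ⟨h1, h2⟩ | ⟨h1, h2⟩
            · exact absurd hp1 (h1 ▸ hz)
            · exact Prod.ext h2.symm h1.symm
          · rintro rfl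
            exact ⟨⟨Finset.mem_univ _, hzz'.symm, hz', hz⟩, Sym2.eq_swap⟩
        rw [this]
        simp [hχ, hz, hz']
      · have : S.filter (fun p => s(z, z') = s(p.1, p.2)) = ∅ := by
          rw [Finset.filter_eq_empty_iff]
          intro p hp he
          rw [hS, Finset.mem_filter] at hp
          obtain ⟨-, hadj, hp1, hp2⟩ := hp
          rw [Sym2.eq_iff] at he
          rcases he with ⟨h1, h2⟩ | ⟨h1, h2⟩
          · exact absurd hp1 (h1 ▸ hz)
          · exact absurd hp1 (h2 ▸ hz')
        rw [this]
        simp [hχ, hz, hz']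
    exact (zmod2_flip _ _ _ _ key).trans (add_comm _ _)
  have hconst : ∀ z z' : V, g z + χ z = g z' + χ z' := by
    intro z z'
    obtain ⟨w⟩ := hT.isConnected.preconnected z z'
    induction w with
    | nil => rfl
    | cons h p ih => exact (hstep _ _ h).trans ih
  ext f
  induction f using Sym2.ind with
  | _ x y =>
  simp only [symmDiffFamily, edgeBoundary, Finset.mem_filter, Finset.mem_univ, true_and]
  by_cases hG : s(x, y) ∈ G.edgeSet
  · simp only [hG, true_and]
    rw [exists_sym2_mem_iff' x y (· ∈ A)]
    have hfilter : (S.filter fun i => ∃ u v, s(x, y) = s(u, v) ∧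
          (T.deleteEdges {s(i.1, i.2)}).Reachable i.1 u ∧
          ¬(T.deleteEdges {s(i.1, i.2)}).Reachable i.1 v) =
        S.filter fun p => (R p x ∧ ¬ R p y) ∨ (R p y ∧ ¬ R p x) := by
      apply Finset.filter_congr
      intro p hp
      exact exists_sym2_mem_iff' x y (fun w => (T.deleteEdges {s(p.1, p.2)}).Reachable p.1 w)
    rw [hfilter, odd_iff_zmod2', ← Finset.sum_boole]
    have hsum : (∑ p ∈ S, if (R p x ∧ ¬ R p y) ∨ (R p y ∧ ¬ R p x) then (1 : ZMod 2) else 0) =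
        g x + g y := by
      rw [hg, ← Finset.sum_add_distrib]
      refine Finset.sum_congr rfl fun p hp => ?_
      by_cases h1 : R p x <;> by_cases h2 : R p y <;> simp [h1, h2] <;> decide
    rw [hsum]
    have hxy : g x + g y = χ x + χ y :=
      (zmod2_flip _ _ _ _ (hconst x y)).trans (add_comm _ _)
    rw [hxy]
    by_cases hx : x ∈ A <;> by_cases hy : y ∈ A <;> simp [hχ, hx, hy] <;> decide
  · simp [hG]
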